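/- Proposition 3, doubly-robust identification (not-yet-treated comparison): Under the overlap condition and the conditional identification conditions (a), (b), (c) with comparison event C = {G > t}, and given 𝒳-measurable integrable outcome functions μ^{s'}_{g} and μ^{s'}_{c} satisfying, almost surely, μ^{s'}_{g}·π_{g,s'} = E[1_{G=g}1_{S_{s'}}·ΔY | 𝒳] and μ^{s'}_{c}·π_{c,s'} = E[1_C 1_{S_{s'}}·ΔY | 𝒳], the doubly-robust estimand identifies the causal difference in ATTs: E[(w₁ − w₂)·(ΔY − μ^{s'}_{g})] − E[(w₃ − w₄)·(ΔY − μ^{s'}_{c})] = CDATT(g,t), where ΔY = Y_t − Y_{g−1} is the observed change in outcomes and the weights are w₁ = 1_{G=g}1_{S_s}/p, w₂ = (1_{G=g}1_{S_{s'}}·π_{g,s}/π_{g,s'}) / E[1_{G=g}1_{S_{s'}}·π_{g,s}/π_{g,s'}], w₃ = (1_C 1_{S_s}·π_{g,s}/π_{c,s}) / E[1_C 1_{S_s}·π_{g,s}/π_{c,s}], and w₄ = (1_C 1_{S_{s'}}·π_{g,s}/π_{c,s'}) / E[1_C 1_{S_{s'}}·π_{g,s}/π_{c,s'}]. -/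

import Mathlib

open MeasureTheory ProbabilityTheory
open scoped Classical

section Helpers
variable {Ω : Type*} {𝒳 : MeasurableSpace Ω} [m0 : MeasurableSpace Ω] {μ : Measure Ω}
  [IsProbabilityMeasure μ]

/-- Tower property with a `𝒳`-measurable multiplier. -/
lemma tower_mul (h𝒳 : 𝒳 ≤ m0) {h f : Ω → ℝ}
    (hh : StronglyMeasurable[𝒳] h) (hf : Integrable f μ)
    (hhf : Integrable (fun ω => h ω * f ω) μ) :
    ∫ ω, h ω * f ω ∂μ = ∫ ω, h ω * (μ[f|𝒳]) ω ∂μ := by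
  haveI : SigmaFinite (μ.trim h𝒳) := inferInstance
  have h1 : μ[h * f|𝒳] =ᵐ[μ] h * μ[f|𝒳] :=
    condExp_mul_of_stronglyMeasurable_left hh hhf hf
  calc ∫ ω, h ω * f ω ∂μ = ∫ ω, (μ[h * f|𝒳]) ω ∂μ := (integral_condExp h𝒳).symm
    _ = ∫ ω, (h * μ[f|𝒳]) ω ∂μ := integral_congr_ae h1
    _ = ∫ ω, h ω * (μ[f|𝒳]) ω ∂μ := rfl

/-- a.e. bounds on a version `π` of the conditional expectation of an indicator. -/
lemma pi_bounds (h𝒳 : 𝒳 ≤ m0) {E : Set Ω} (hE : MeasurableSet E) {π : Ω → ℝ}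
    (hπ : π =ᵐ[μ] μ[E.indicator (fun _ => (1 : ℝ)) | 𝒳]) :
    ∀ᵐ ω ∂μ, 0 ≤ π ω ∧ π ω ≤ 1 := by
  have hint : Integrable (E.indicator (fun _ => (1 : ℝ))) μ :=
    (integrable_const (1:ℝ)).indicator hE
  have h0 : 0 ≤ᵐ[μ] μ[E.indicator (fun _ => (1 : ℝ)) | 𝒳] :=
    condExp_nonneg (Filter.Eventually.of_forall fun ω =>
      Set.indicator_nonneg (fun _ _ => zero_le_one) ω)
  have h1 : μ[E.indicator (fun _ => (1 : ℝ)) | 𝒳] ≤ᵐ[μ] μ[(fun _ => (1 : ℝ)) | 𝒳] :=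
    condExp_mono hint (integrable_const 1)
      (Filter.Eventually.of_forall fun ω => Set.indicator_le_self' (fun _ _ => zero_le_one) ω)
  have hc : μ[(fun _ : Ω => (1 : ℝ)) | 𝒳] = fun _ => (1:ℝ) := condExp_const h𝒳 (1:ℝ)
  filter_upwards [hπ, h0, h1] with ω hω h0ω h1ω
  constructor
  · rw [hω]; exact h0ω
  · rw [hω]; exact h1ω.trans (le_of_eq (congrFun hc ω))

lemma pi_norm_bd (h𝒳 : 𝒳 ≤ m0) {E : Set Ω} (hE : MeasurableSet E) {π : Ω → ℝ}
    (hπ : π =ᵐ[μ] μ[E.indicator (fun _ => (1 : ℝ)) | 𝒳]) :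
    ∀ᵐ ω ∂μ, ‖π ω‖ ≤ 1 := by
  filter_upwards [pi_bounds h𝒳 hE hπ] with ω hω
  rw [Real.norm_eq_abs, abs_le]; exact ⟨by linarith [hω.1], hω.2⟩

/-- Pull-out: conditional expectation of an indicator times a `𝒳`-measurable function. -/
lemma condexp_indicator_mul (h𝒳 : 𝒳 ≤ m0) {q π : Ω → ℝ}
    (hq : StronglyMeasurable[𝒳] q) (hqint : Integrable q μ)
    {E : Set Ω} (hE : MeasurableSet E)
    (hπ : π =ᵐ[μ] μ[E.indicator (fun _ => (1 : ℝ)) | 𝒳]) :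
    μ[E.indicator q|𝒳] =ᵐ[μ] fun ω => q ω * π ω := by
  have hind : Integrable (E.indicator (fun _ => (1 : ℝ))) μ :=
    (integrable_const (1:ℝ)).indicator hE
  have he : E.indicator q = q * E.indicator (fun _ => (1:ℝ)) := by
    funext ω; by_cases h : ω ∈ E <;>
      simp [Set.indicator_of_mem, Set.indicator_of_notMem, h]
  have hqi : Integrable (q * E.indicator (fun _ => (1:ℝ))) μ := by
    rw [← he]; exact hqint.indicator hE
  have h1 : μ[q * E.indicator (fun _ => (1:ℝ))|𝒳]
      =ᵐ[μ] q * μ[E.indicator (fun _ => (1:ℝ))|𝒳] :=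
    condExp_mul_of_stronglyMeasurable_left hq hqi hind
  rw [he]
  filter_upwards [h1, hπ] with ω h1ω hπω
  rw [h1ω]; simp only [Pi.mul_apply]; rw [hπω]

/-- Master computation: integral of the ratio-weighted indicator term. -/
lemma ratio_integral (h𝒳 : 𝒳 ≤ m0) {E : Set Ω} (hE : MeasurableSet E)
    {π πE : Ω → ℝ} (hπm : StronglyMeasurable[𝒳] π) (hπbd : ∀ᵐ ω ∂μ, ‖π ω‖ ≤ 1)
    (hπEm : StronglyMeasurable[𝒳] πE) {ε : ℝ} (hε : 0 < ε)
    (hπE_bd : ∀ᵐ ω ∂μ, ε ≤ πE ω)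
    {f : Ω → ℝ} (hf : Integrable f μ) :
    ∫ ω, E.indicator (fun _ => (1:ℝ)) ω * π ω / πE ω * f ω ∂μ
      = ∫ ω, π ω / πE ω * (μ[E.indicator f|𝒳]) ω ∂μ := by
  have hhm : StronglyMeasurable[𝒳] (fun ω => π ω / πE ω) :=
    (hπm.measurable.div hπEm.measurable).stronglyMeasurable
  have hhbd : ∀ᵐ ω ∂μ, ‖π ω / πE ω‖ ≤ 1 / ε := by
    filter_upwards [hπbd, hπE_bd] with ω h1 h2
    rw [norm_div]
    have h3 : ‖πE ω‖ = πE ω := Real.norm_of_nonneg (le_trans hε.le h2)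
    rw [h3]
    exact div_le_div₀ zero_le_one h1 hε h2
  have heq : (fun ω => E.indicator (fun _ => (1:ℝ)) ω * π ω / πE ω * f ω)
      = fun ω => (π ω / πE ω) * (E.indicator f ω) := by
    funext ω; by_cases h : ω ∈ E <;>
      simp [Set.indicator_of_mem, Set.indicator_of_notMem, h] <;> ring
  rw [heq]
  exact tower_mul h𝒳 hhm (hf.indicator hE)
    ((hf.indicator hE).bdd_mul ((hhm.mono h𝒳).aestronglyMeasurable) hhbd)

lemma ratio_mul_integrable {E : Set Ω} (hE : MeasurableSet E)
    {π πE : Ω → ℝ} (hπm : StronglyMeasurable[𝒳] π) (hπbd : ∀ᵐ ω ∂μ, ‖π ω‖ ≤ 1)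
    (h𝒳 : 𝒳 ≤ m0) (hπEm : StronglyMeasurable[𝒳] πE) {ε : ℝ} (hε : 0 < ε)
    (hπE_bd : ∀ᵐ ω ∂μ, ε ≤ πE ω) (d : ℝ)
    {f : Ω → ℝ} (hf : Integrable f μ) :
    Integrable (fun ω => E.indicator (fun _ => (1:ℝ)) ω * π ω / πE ω / d * f ω) μ := by
  have hm : AEStronglyMeasurable
      (fun ω => E.indicator (fun _ => (1:ℝ)) ω * π ω / πE ω / d) μ := by
    refine Measurable.aestronglyMeasurable ?_
    exact (((measurable_const.indicator hE).mul
      ((hπm.mono h𝒳).measurable)).div ((hπEm.mono h𝒳).measurable)).div measurable_const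
  refine hf.bdd_mul (c := 1 / ε / ‖d‖) hm ?_
  filter_upwards [hπbd, hπE_bd] with ω h1 h2
  have h3 : ‖E.indicator (fun _ => (1:ℝ)) ω‖ ≤ 1 := by
    by_cases h : ω ∈ E <;>
      simp [Set.indicator_of_mem, Set.indicator_of_notMem, h]
  have hπE : ‖πE ω‖ = πE ω := Real.norm_of_nonneg (le_trans hε.le h2)
  have hnum : ‖E.indicator (fun _ => (1:ℝ)) ω‖ * ‖π ω‖ ≤ 1 := by
    calc ‖E.indicator (fun _ => (1:ℝ)) ω‖ * ‖π ω‖ ≤ 1 * 1 :=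
          mul_le_mul h3 h1 (norm_nonneg _) zero_le_one
      _ = 1 := by norm_num
  have hstep : ‖E.indicator (fun _ => (1:ℝ)) ω‖ * ‖π ω‖ / ‖πE ω‖ ≤ 1 / ε := by
    rw [hπE]; exact div_le_div₀ zero_le_one hnum hε h2
  calc ‖E.indicator (fun _ => (1:ℝ)) ω * π ω / πE ω / d‖
      = ‖E.indicator (fun _ => (1:ℝ)) ω‖ * ‖π ω‖ / ‖πE ω‖ / ‖d‖ := by
        rw [norm_div, norm_div, norm_mul]
    _ = ‖E.indicator (fun _ => (1:ℝ)) ω‖ * ‖π ω‖ / ‖πE ω‖ * ‖d‖⁻¹ := by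
        rw [div_eq_mul_inv]
    _ ≤ 1 / ε * ‖d‖⁻¹ :=
        mul_le_mul_of_nonneg_right hstep (inv_nonneg.mpr (norm_nonneg _))
    _ = 1 / ε / ‖d‖ := by rw [div_eq_mul_inv (1/ε)]

lemma denom_eq (h𝒳 : 𝒳 ≤ m0) {E : Set Ω} (hE : MeasurableSet E)
    {π πE : Ω → ℝ} (hπm : StronglyMeasurable[𝒳] π) (hπbd : ∀ᵐ ω ∂μ, ‖π ω‖ ≤ 1)
    (hπEm : StronglyMeasurable[𝒳] πE) {ε : ℝ} (hε : 0 < ε)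
    (hπE_bd : ∀ᵐ ω ∂μ, ε ≤ πE ω)
    (hπE : πE =ᵐ[μ] μ[E.indicator (fun _ => (1 : ℝ)) | 𝒳]) :
    ∫ ω, E.indicator (fun _ => (1:ℝ)) ω * π ω / πE ω ∂μ = ∫ ω, π ω ∂μ := by
  have h1 : (fun ω => E.indicator (fun _ => (1:ℝ)) ω * π ω / πE ω)
      = fun ω => E.indicator (fun _ => (1:ℝ)) ω * π ω / πE ω * (fun _ : Ω => (1:ℝ)) ω := by
    funext ω; simp
  have h2 : E.indicator (fun _ : Ω => (1:ℝ)) = E.indicator (fun _ : Ω => (1:ℝ)) := rfl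
  rw [h1, ratio_integral h𝒳 hE hπm hπbd hπEm hε hπE_bd (integrable_const (1:ℝ))]
  refine integral_congr_ae ?_
  filter_upwards [hπE, hπE_bd] with ω h3 h4
  rw [← h3]
  exact div_mul_cancel₀ (π ω) (by linarith)

end Helpers

/-- Proposition 3, doubly-robust identification of `CDATT(g,t)` with the
not-yet-treated comparison group `C = {G > t}`:
`E[(w₁ − w₂)·(ΔY − μ^{s'}_g)] − E[(w₃ − w₄)·(ΔY − μ^{s'}_c)] = CDATT(g,t)`. -/
theorem cdatt_dr_identification_not_yet_treated
    {Ω : Type*} [m0 : MeasurableSpace Ω] (μ : Measure Ω) [IsProbabilityMeasure μ]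
    (T : ℕ) (hT : 1 ≤ T)
    (G : Ω → ℕ∞) (hGmeas : Measurable G)
    (hGrange : ∀ ω, G ω = ⊤ ∨ (1 ≤ G ω ∧ G ω ≤ (T : ℕ∞)))
    (Ss : Set Ω) (hSs : MeasurableSet Ss)
    (Ys Ys' Y : ℕ → ℕ∞ → Ω → ℝ)
    (hY : ∀ τ γ ω, Y τ γ ω = if ω ∈ Ss then Ys τ γ ω else Ys' τ γ ω)
    (hIntYs : ∀ τ γ, Integrable (Ys τ γ) μ)
    (hIntYs' : ∀ τ γ, Integrable (Ys' τ γ) μ)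
    (Yobs : ℕ → Ω → ℝ)
    (hYobs : ∀ τ ω, Yobs τ ω = if G ω ≤ (τ : ℕ∞) then Y τ (G ω) ω else Y τ ⊤ ω)
    (hIntYobs : ∀ τ, Integrable (Yobs τ) μ)
    (g t : ℕ) (hg1 : 1 ≤ g) (hgt : g ≤ t) (htT : t ≤ T)
    -- covariate σ-algebra and comparison event
    (𝒳 : MeasurableSpace Ω) (h𝒳 : 𝒳 ≤ m0)
    (C : Set Ω) (hC : C = {ω | (t : ℕ∞) < G ω})
    -- group-subgroup events
    (Egs Egs' Ecs Ecs' : Set Ω)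
    (hEgs : Egs = {ω | G ω = (g : ℕ∞)} ∩ Ss)
    (hEgs' : Egs' = {ω | G ω = (g : ℕ∞)} ∩ Ssᶜ)
    (hEcs : Ecs = C ∩ Ss) (hEcs' : Ecs' = C ∩ Ssᶜ)
    -- propensity scores: versions of the conditional expectations of indicators
    (πgs πgs' πcs πcs' : Ω → ℝ)
    (hπgs_meas : StronglyMeasurable[𝒳] πgs)
    (hπgs : πgs =ᵐ[μ] μ[Egs.indicator (fun _ => (1 : ℝ)) | 𝒳])
    (hπgs'_meas : StronglyMeasurable[𝒳] πgs')
    (hπgs' : πgs' =ᵐ[μ] μ[Egs'.indicator (fun _ => (1 : ℝ)) | 𝒳])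
    (hπcs_meas : StronglyMeasurable[𝒳] πcs)
    (hπcs : πcs =ᵐ[μ] μ[Ecs.indicator (fun _ => (1 : ℝ)) | 𝒳])
    (hπcs'_meas : StronglyMeasurable[𝒳] πcs')
    (hπcs' : πcs' =ᵐ[μ] μ[Ecs'.indicator (fun _ => (1 : ℝ)) | 𝒳])
    -- overlap (Assumption 9)
    (ε : ℝ) (hε : 0 < ε)
    (p : ℝ) (hp : p = (μ Egs).toReal) (hpε : ε < p)
    (hπgs'_bd : ∀ᵐ ω ∂μ, ε ≤ πgs' ω)
    (hπcs_bd : ∀ᵐ ω ∂μ, ε ≤ πcs ω)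
    (hπcs'_bd : ∀ᵐ ω ∂μ, ε ≤ πcs' ω)
    -- observed change and counterfactual untreated changes
    (ΔY Δs Δs' : Ω → ℝ)
    (hΔY : ΔY = fun ω => Yobs t ω - Yobs (g - 1) ω)
    (hΔs : Δs = fun ω => Ys t ⊤ ω - Ys (g - 1) ⊤ ω)
    (hΔs' : Δs' = fun ω => Ys' t ⊤ ω - Ys' (g - 1) ⊤ ω)
    -- (a) conditional no subgroup selection
    (ha : (fun ω => (μ[Egs.indicator (fun ω' => Ys' t (g : ℕ∞) ω' - Ys' t ⊤ ω') | 𝒳]) ω * πgs' ω)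
        =ᵐ[μ] fun ω => (μ[Egs'.indicator (fun ω' => Ys' t (g : ℕ∞) ω' - Ys' t ⊤ ω') | 𝒳]) ω * πgs ω)
    -- (b) conditional parallel trends within each subgroup
    (hb_s : (fun ω => (μ[Egs.indicator Δs | 𝒳]) ω * πcs ω)
        =ᵐ[μ] fun ω => (μ[Ecs.indicator Δs | 𝒳]) ω * πgs ω)
    (hb_s' : (fun ω => (μ[Egs'.indicator Δs' | 𝒳]) ω * πcs' ω)
        =ᵐ[μ] fun ω => (μ[Ecs'.indicator Δs' | 𝒳]) ω * πgs' ω)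
    -- (c) conditional parallel gaps across subgroups for the s'-counterfactual change
    (hc_g : (fun ω => (μ[Egs.indicator Δs' | 𝒳]) ω * πgs' ω)
        =ᵐ[μ] fun ω => (μ[Egs'.indicator Δs' | 𝒳]) ω * πgs ω)
    (hc_c : (fun ω => (μ[Ecs.indicator Δs' | 𝒳]) ω * πcs' ω)
        =ᵐ[μ] fun ω => (μ[Ecs'.indicator Δs' | 𝒳]) ω * πcs ω)
    -- outcome models (𝒳-measurable, integrable)
    (μg' μc' : Ω → ℝ)
    (hμg'_meas : StronglyMeasurable[𝒳] μg') (hμg'_int : Integrable μg' μ)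
    (hμc'_meas : StronglyMeasurable[𝒳] μc') (hμc'_int : Integrable μc' μ)
    (hμg' : (fun ω => μg' ω * πgs' ω) =ᵐ[μ] μ[Egs'.indicator ΔY | 𝒳])
    (hμc' : (fun ω => μc' ω * πcs' ω) =ᵐ[μ] μ[Ecs'.indicator ΔY | 𝒳])
    -- weights
    (w₁ w₂ w₃ w₄ : Ω → ℝ)
    (hw₁ : w₁ = fun ω => Egs.indicator (fun _ => (1 : ℝ)) ω / p)
    (hw₂ : w₂ = fun ω => (Egs'.indicator (fun _ => (1 : ℝ)) ω * πgs ω / πgs' ω)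
        / ∫ ω', Egs'.indicator (fun _ => (1 : ℝ)) ω' * πgs ω' / πgs' ω' ∂μ)
    (hw₃ : w₃ = fun ω => (Ecs.indicator (fun _ => (1 : ℝ)) ω * πgs ω / πcs ω)
        / ∫ ω', Ecs.indicator (fun _ => (1 : ℝ)) ω' * πgs ω' / πcs ω' ∂μ)
    (hw₄ : w₄ = fun ω => (Ecs'.indicator (fun _ => (1 : ℝ)) ω * πgs ω / πcs' ω)
        / ∫ ω', Ecs'.indicator (fun _ => (1 : ℝ)) ω' * πgs ω' / πcs' ω' ∂μ) :
    -- doubly-robust estimand = CDATT(g,t)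
    (∫ ω, (w₁ ω - w₂ ω) * (ΔY ω - μg' ω) ∂μ)
      - (∫ ω, (w₃ ω - w₄ ω) * (ΔY ω - μc' ω) ∂μ)
    = (∫ ω, (Ys t (g : ℕ∞) ω - Ys t ⊤ ω) ∂(μ[|Egs]))
      - (∫ ω, (Ys' t (g : ℕ∞) ω - Ys' t ⊤ ω) ∂(μ[|Egs])) := by
  letI inst : MeasurableSpace Ω := m0
  haveI hsf : SigmaFinite (μ.trim h𝒳) := inferInstance
  -- measurable sets
  have hmC : MeasurableSet C := by rw [hC]; show MeasurableSet (G ⁻¹' Set.Ioi (t:ℕ∞)); exact hGmeas MeasurableSet.of_discrete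
  have hsetg : {ω | G ω = (g:ℕ∞)} = G ⁻¹' {(g:ℕ∞)} := rfl
  have hmEgs : MeasurableSet Egs := by
    rw [hEgs, hsetg]; exact (hGmeas MeasurableSet.of_discrete).inter hSs
  have hmEgs' : MeasurableSet Egs' := by
    rw [hEgs', hsetg]; exact (hGmeas MeasurableSet.of_discrete).inter hSs.compl
  have hmEcs : MeasurableSet Ecs := by rw [hEcs]; exact hmC.inter hSs
  have hmEcs' : MeasurableSet Ecs' := by rw [hEcs']; exact hmC.inter hSs.compl
  -- p facts
  have hppos : 0 < p := hε.trans hpε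
  have hpne : p ≠ 0 := ne_of_gt hppos
  -- integrability
  have hIΔY : Integrable ΔY μ := by rw [hΔY]; exact (hIntYobs t).sub (hIntYobs (g-1))
  have hIΔs : Integrable Δs μ := by rw [hΔs]; exact (hIntYs t ⊤).sub (hIntYs (g-1) ⊤)
  have hIΔs' : Integrable Δs' μ := by rw [hΔs']; exact (hIntYs' t ⊤).sub (hIntYs' (g-1) ⊤)
  have hITs : Integrable (fun ω => Ys t (g:ℕ∞) ω - Ys t ⊤ ω) μ :=
    (hIntYs t ((g:ℕ∞))).sub (hIntYs t ⊤)
  have hITs' : Integrable (fun ω => Ys' t (g:ℕ∞) ω - Ys' t ⊤ ω) μ :=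
    (hIntYs' t ((g:ℕ∞))).sub (hIntYs' t ⊤)
  -- bounds on πgs
  have hπgs_bd1 : ∀ᵐ ω ∂μ, ‖πgs ω‖ ≤ 1 := pi_norm_bd h𝒳 hmEgs hπgs
  -- casts
  have hcast1 : (g:ℕ∞) ≤ (t:ℕ∞) := by exact_mod_cast hgt
  have hcast2 : ¬ ((g:ℕ∞) ≤ ((g-1 : ℕ):ℕ∞)) := by
    rw [Nat.cast_le]; omega
  have hgt1 : ((g-1:ℕ):ℕ∞) ≤ (t:ℕ∞) := by rw [Nat.cast_le]; omega
  -- pointwise values of ΔY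
  have hΔY_g : ∀ ω, G ω = (g:ℕ∞) → ΔY ω = Y t (g:ℕ∞) ω - Y (g-1) ⊤ ω := by
    intro ω hG
    rw [hΔY]
    show Yobs t ω - Yobs (g-1) ω = _
    rw [hYobs t ω, hYobs (g-1) ω, hG, if_pos hcast1, if_neg hcast2]
  have hΔY_c : ∀ ω, ω ∈ C → ΔY ω = Y t ⊤ ω - Y (g-1) ⊤ ω := by
    intro ω hω
    rw [hC] at hω
    have ht' : (t:ℕ∞) < G ω := hω
    rw [hΔY]
    show Yobs t ω - Yobs (g-1) ω = _
    rw [hYobs t ω, hYobs (g-1) ω, if_neg (not_le.mpr ht'),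
      if_neg (not_le.mpr (lt_of_le_of_lt hgt1 ht'))]
  -- indicator decompositions
  have e_gs : Egs.indicator ΔY
      = Egs.indicator (fun ω => Ys t (g:ℕ∞) ω - Ys t ⊤ ω) + Egs.indicator Δs := by
    funext ω; by_cases hω : ω ∈ Egs
    · have hmem := hω; rw [hEgs] at hmem
      obtain ⟨hG, hS⟩ := hmem
      have hG' : G ω = (g:ℕ∞) := hG
      simp only [Pi.add_apply, Set.indicator_of_mem hω]
      rw [hΔY_g ω hG', hY t (g:ℕ∞) ω, hY (g-1) ⊤ ω, if_pos hS, if_pos hS, hΔs]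
      show _ = _ + (Ys t ⊤ ω - Ys (g-1) ⊤ ω)
      ring
    · simp [Set.indicator_of_notMem hω]
  have e_gs' : Egs'.indicator ΔY
      = Egs'.indicator (fun ω => Ys' t (g:ℕ∞) ω - Ys' t ⊤ ω) + Egs'.indicator Δs' := by
    funext ω; by_cases hω : ω ∈ Egs'
    · have hmem := hω; rw [hEgs'] at hmem
      obtain ⟨hG, hS⟩ := hmem
      have hG' : G ω = (g:ℕ∞) := hG
      have hS' : ω ∉ Ss := hS
      simp only [Pi.add_apply, Set.indicator_of_mem hω]
      rw [hΔY_g ω hG', hY t (g:ℕ∞) ω, hY (g-1) ⊤ ω, if_neg hS', if_neg hS', hΔs']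
      show _ = _ + (Ys' t ⊤ ω - Ys' (g-1) ⊤ ω)
      ring
    · simp [Set.indicator_of_notMem hω]
  have e_cs : Ecs.indicator ΔY = Ecs.indicator Δs := by
    funext ω; by_cases hω : ω ∈ Ecs
    · have hmem := hω; rw [hEcs] at hmem
      obtain ⟨hc, hS⟩ := hmem
      rw [Set.indicator_of_mem hω, Set.indicator_of_mem hω,
        hΔY_c ω hc, hY t ⊤ ω, hY (g-1) ⊤ ω, if_pos hS, if_pos hS, hΔs]
    · simp [Set.indicator_of_notMem hω]
  have e_cs' : Ecs'.indicator ΔY = Ecs'.indicator Δs' := by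
    funext ω; by_cases hω : ω ∈ Ecs'
    · have hmem := hω; rw [hEcs'] at hmem
      obtain ⟨hc, hS⟩ := hmem
      have hS' : ω ∉ Ss := hS
      rw [Set.indicator_of_mem hω, Set.indicator_of_mem hω,
        hΔY_c ω hc, hY t ⊤ ω, hY (g-1) ⊤ ω, if_neg hS', if_neg hS', hΔs']
    · simp [Set.indicator_of_notMem hω]
  -- pull-out identities
  have hμg'πgs : μ[Egs.indicator μg'|𝒳] =ᵐ[μ] fun ω => μg' ω * πgs ω :=
    condexp_indicator_mul h𝒳 hμg'_meas hμg'_int hmEgs hπgs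
  have hμg'πgs' : μ[Egs'.indicator μg'|𝒳] =ᵐ[μ] fun ω => μg' ω * πgs' ω :=
    condexp_indicator_mul h𝒳 hμg'_meas hμg'_int hmEgs' hπgs'
  have hμc'πcs : μ[Ecs.indicator μc'|𝒳] =ᵐ[μ] fun ω => μc' ω * πcs ω :=
    condexp_indicator_mul h𝒳 hμc'_meas hμc'_int hmEcs hπcs
  have hμc'πcs' : μ[Ecs'.indicator μc'|𝒳] =ᵐ[μ] fun ω => μc' ω * πcs' ω :=
    condexp_indicator_mul h𝒳 hμc'_meas hμc'_int hmEcs' hπcs'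
  -- integrable products with πgs
  have hQg_int : Integrable (fun ω => μg' ω * πgs ω) μ := by
    have h := hμg'_int.bdd_mul (c := 1)
      ((hπgs_meas.mono h𝒳).aestronglyMeasurable) hπgs_bd1
    exact h.congr (Filter.Eventually.of_forall fun ω => mul_comm _ _)
  have hQc_int : Integrable (fun ω => μc' ω * πgs ω) μ := by
    have h := hμc'_int.bdd_mul (c := 1)
      ((hπgs_meas.mono h𝒳).aestronglyMeasurable) hπgs_bd1
    exact h.congr (Filter.Eventually.of_forall fun ω => mul_comm _ _)
  -- indicator subtraction identities
  have hsub : ∀ (E : Set Ω) (q : Ω → ℝ),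
      E.indicator (fun ω => ΔY ω - q ω) = E.indicator ΔY - E.indicator q := by
    intro E q; funext ω; by_cases h : ω ∈ E <;>
      simp [Set.indicator_of_mem, Set.indicator_of_notMem, h]
  -- conditional expectations of the residuals
  have hce2 : μ[Egs'.indicator (fun ω => ΔY ω - μg' ω)|𝒳] =ᵐ[μ] (0 : Ω → ℝ) := by
    rw [hsub Egs' μg']
    have h := condExp_sub (m := 𝒳) (hIΔY.indicator hmEgs') (hμg'_int.indicator hmEgs')
    filter_upwards [h, hμg', hμg'πgs'] with ω h1 h2 h3
    simp only [Pi.sub_apply] at h1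
    simp only [Pi.zero_apply]
    rw [h1, h3, ← h2, sub_self]
  have hce4 : μ[Ecs'.indicator (fun ω => ΔY ω - μc' ω)|𝒳] =ᵐ[μ] (0 : Ω → ℝ) := by
    rw [hsub Ecs' μc']
    have h := condExp_sub (m := 𝒳) (hIΔY.indicator hmEcs') (hμc'_int.indicator hmEcs')
    filter_upwards [h, hμc', hμc'πcs'] with ω h1 h2 h3
    simp only [Pi.sub_apply] at h1
    simp only [Pi.zero_apply]
    rw [h1, h3, ← h2, sub_self]
  have hce3 : μ[Ecs.indicator (fun ω => ΔY ω - μc' ω)|𝒳]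
      =ᵐ[μ] fun ω => (μ[Ecs.indicator Δs|𝒳]) ω - μc' ω * πcs ω := by
    rw [hsub Ecs μc', e_cs]
    have h := condExp_sub (m := 𝒳) (hIΔs.indicator hmEcs) (hμc'_int.indicator hmEcs)
    filter_upwards [h, hμc'πcs] with ω h1 h3
    simp only [Pi.sub_apply] at h1
    rw [h1, h3]
  -- denominators
  have hπint : ∫ ω, πgs ω ∂μ = p := by
    calc ∫ ω, πgs ω ∂μ
        = ∫ ω, (μ[Egs.indicator (fun _ => (1:ℝ))|𝒳]) ω ∂μ := integral_congr_ae hπgs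
      _ = ∫ ω, Egs.indicator (fun _ => (1:ℝ)) ω ∂μ := integral_condExp h𝒳
      _ = (μ Egs).toReal • (1:ℝ) := integral_indicator_const (1:ℝ) hmEgs
      _ = p := by rw [hp]; simp
  have hD2 : ∫ ω', Egs'.indicator (fun _ => (1:ℝ)) ω' * πgs ω' / πgs' ω' ∂μ = p := by
    rw [denom_eq h𝒳 hmEgs' hπgs_meas hπgs_bd1 hπgs'_meas hε hπgs'_bd hπgs']; exact hπint
  have hD3 : ∫ ω', Ecs.indicator (fun _ => (1:ℝ)) ω' * πgs ω' / πcs ω' ∂μ = p := by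
    rw [denom_eq h𝒳 hmEcs hπgs_meas hπgs_bd1 hπcs_meas hε hπcs_bd hπcs]; exact hπint
  have hD4 : ∫ ω', Ecs'.indicator (fun _ => (1:ℝ)) ω' * πgs ω' / πcs' ω' ∂μ = p := by
    rw [denom_eq h𝒳 hmEcs' hπgs_meas hπgs_bd1 hπcs'_meas hε hπcs'_bd hπcs']; exact hπint
  -- integrable residuals
  have hf1 : Integrable (fun ω => ΔY ω - μg' ω) μ := hIΔY.sub hμg'_int
  have hf2 : Integrable (fun ω => ΔY ω - μc' ω) μ := hIΔY.sub hμc'_int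
  -- the four weighted integrals
  have hS1 : ∫ ω, w₁ ω * (ΔY ω - μg' ω) ∂μ
      = p⁻¹ * (∫ ω, Egs.indicator ΔY ω ∂μ - ∫ ω, μg' ω * πgs ω ∂μ) := by
    have hfun1 : (fun ω => w₁ ω * (ΔY ω - μg' ω))
        = fun ω => p⁻¹ * (Egs.indicator (fun ω' => ΔY ω' - μg' ω') ω) := by
      rw [hw₁]; funext ω; by_cases hω : ω ∈ Egs <;>
        simp [Set.indicator_of_mem, Set.indicator_of_notMem, hω] <;> ring
    rw [hfun1, integral_const_mul, hsub Egs μg',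
      integral_sub' (hIΔY.indicator hmEgs) (hμg'_int.indicator hmEgs)]
    congr 2
    calc ∫ ω, Egs.indicator μg' ω ∂μ
        = ∫ ω, (μ[Egs.indicator μg'|𝒳]) ω ∂μ := (integral_condExp h𝒳).symm
      _ = ∫ ω, μg' ω * πgs ω ∂μ := integral_congr_ae hμg'πgs
  have hS2 : ∫ ω, w₂ ω * (ΔY ω - μg' ω) ∂μ = 0 := by
    have hfun : (fun ω => w₂ ω * (ΔY ω - μg' ω)) = fun ω =>
        p⁻¹ * (Egs'.indicator (fun _ => (1:ℝ)) ω * πgs ω / πgs' ω * (ΔY ω - μg' ω)) := by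
      rw [hw₂, hD2]; funext ω; ring
    rw [hfun, integral_const_mul,
      ratio_integral h𝒳 hmEgs' hπgs_meas hπgs_bd1 hπgs'_meas hε hπgs'_bd hf1]
    have hz : ∫ ω, πgs ω / πgs' ω
        * (μ[Egs'.indicator (fun ω' => ΔY ω' - μg' ω')|𝒳]) ω ∂μ = 0 := by
      rw [integral_eq_zero_of_ae]
      · filter_upwards [hce2] with ω h
        rw [Pi.zero_apply] at h
        simp [h]
    rw [hz, mul_zero]
  have hS4 : ∫ ω, w₄ ω * (ΔY ω - μc' ω) ∂μ = 0 := by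
    have hfun : (fun ω => w₄ ω * (ΔY ω - μc' ω)) = fun ω =>
        p⁻¹ * (Ecs'.indicator (fun _ => (1:ℝ)) ω * πgs ω / πcs' ω * (ΔY ω - μc' ω)) := by
      rw [hw₄, hD4]; funext ω; ring
    rw [hfun, integral_const_mul,
      ratio_integral h𝒳 hmEcs' hπgs_meas hπgs_bd1 hπcs'_meas hε hπcs'_bd hf2]
    have hz : ∫ ω, πgs ω / πcs' ω
        * (μ[Ecs'.indicator (fun ω' => ΔY ω' - μc' ω')|𝒳]) ω ∂μ = 0 := by
      rw [integral_eq_zero_of_ae]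
      · filter_upwards [hce4] with ω h
        rw [Pi.zero_apply] at h
        simp [h]
    rw [hz, mul_zero]
  have hS3 : ∫ ω, w₃ ω * (ΔY ω - μc' ω) ∂μ
      = p⁻¹ * (∫ ω, Egs.indicator Δs ω ∂μ - ∫ ω, μc' ω * πgs ω ∂μ) := by
    have hfun : (fun ω => w₃ ω * (ΔY ω - μc' ω)) = fun ω =>
        p⁻¹ * (Ecs.indicator (fun _ => (1:ℝ)) ω * πgs ω / πcs ω * (ΔY ω - μc' ω)) := by
      rw [hw₃, hD3]; funext ω; ring
    rw [hfun, integral_const_mul,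
      ratio_integral h𝒳 hmEcs hπgs_meas hπgs_bd1 hπcs_meas hε hπcs_bd hf2]
    congr 1
    have hae3 : (fun ω => πgs ω / πcs ω
        * (μ[Ecs.indicator (fun ω' => ΔY ω' - μc' ω')|𝒳]) ω)
        =ᵐ[μ] fun ω => (μ[Egs.indicator Δs|𝒳]) ω - μc' ω * πgs ω := by
      filter_upwards [hce3, hb_s, hπcs_bd] with ω h1 h2 h3
      rw [h1]
      have hne : πcs ω ≠ 0 := by linarith
      field_simp
      linear_combination -h2
    rw [integral_congr_ae hae3,
      integral_sub (integrable_condExp) hQc_int, integral_condExp h𝒳]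
  -- the key doubly-robust identity for the outcome models
  have hsplit' : μ[Egs'.indicator ΔY|𝒳]
      =ᵐ[μ] μ[Egs'.indicator (fun ω => Ys' t (g:ℕ∞) ω - Ys' t ⊤ ω)|𝒳]
        + μ[Egs'.indicator Δs'|𝒳] := by
    rw [e_gs']
    exact condExp_add (hITs'.indicator hmEgs') (hIΔs'.indicator hmEgs') 𝒳
  have hμc'2 : (fun ω => μc' ω * πcs' ω) =ᵐ[μ] μ[Ecs'.indicator Δs'|𝒳] := by
    rw [← e_cs']; exact hμc'
  have hkey : (fun ω => (μg' ω - μc' ω) * πgs ω)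
      =ᵐ[μ] μ[Egs.indicator (fun ω => Ys' t (g:ℕ∞) ω - Ys' t ⊤ ω)|𝒳] := by
    filter_upwards [hμg', hsplit', ha, hc_g, hμc'2, hb_s', hπgs'_bd, hπcs'_bd]
      with ω h1 h2 hA hC h3 hB hP' hQ'
    have hP'ne : πgs' ω ≠ 0 := by linarith
    have hQ'ne : πcs' ω ≠ 0 := by linarith
    simp only [Pi.add_apply] at h2
    -- abbreviations
    have h12 : μg' ω * πgs' ω
        = (μ[Egs'.indicator (fun ω' => Ys' t (g:ℕ∞) ω' - Ys' t ⊤ ω')|𝒳]) ω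
          + (μ[Egs'.indicator Δs'|𝒳]) ω := by rw [h1, h2]
    have e1 : (μ[Egs'.indicator Δs'|𝒳]) ω = μc' ω * πgs' ω := by
      apply mul_right_cancel₀ hQ'ne
      calc (μ[Egs'.indicator Δs'|𝒳]) ω * πcs' ω
          = (μ[Ecs'.indicator Δs'|𝒳]) ω * πgs' ω := hB
        _ = (μc' ω * πcs' ω) * πgs' ω := by rw [← h3]
        _ = (μc' ω * πgs' ω) * πcs' ω := by ring
    apply mul_right_cancel₀ hP'ne
    calc (μg' ω - μc' ω) * πgs ω * πgs' ω
        = (μg' ω * πgs' ω - μc' ω * πgs' ω) * πgs ω := by ring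
      _ = (μ[Egs'.indicator (fun ω' => Ys' t (g:ℕ∞) ω' - Ys' t ⊤ ω')|𝒳]) ω * πgs ω := by
          rw [h12, ← e1]; ring
      _ = (μ[Egs.indicator (fun ω' => Ys' t (g:ℕ∞) ω' - Ys' t ⊤ ω')|𝒳]) ω * πgs' ω := hA.symm
  have hQdiff : ∫ ω, μg' ω * πgs ω ∂μ - ∫ ω, μc' ω * πgs ω ∂μ
      = ∫ ω, Egs.indicator (fun ω' => Ys' t (g:ℕ∞) ω' - Ys' t ⊤ ω') ω ∂μ := by
    rw [← integral_sub hQg_int hQc_int]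
    calc ∫ ω, μg' ω * πgs ω - μc' ω * πgs ω ∂μ
        = ∫ ω, (μ[Egs.indicator (fun ω' => Ys' t (g:ℕ∞) ω' - Ys' t ⊤ ω')|𝒳]) ω ∂μ := by
          refine integral_congr_ae ?_
          filter_upwards [hkey] with ω h
          rw [← h]; ring
      _ = _ := integral_condExp h𝒳
  -- split of the treated-group observed change
  have hJ1 : ∫ ω, Egs.indicator ΔY ω ∂μ
      = ∫ ω, Egs.indicator (fun ω' => Ys t (g:ℕ∞) ω' - Ys t ⊤ ω') ω ∂μ
        + ∫ ω, Egs.indicator Δs ω ∂μ := by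
    rw [e_gs]
    exact integral_add' (hITs.indicator hmEgs) (hIΔs.indicator hmEgs)
  -- integrability of the four weighted terms
  have hw1int : Integrable (fun ω => w₁ ω * (ΔY ω - μg' ω)) μ := by
    rw [hw₁]
    refine hf1.bdd_mul (c := 1/p) ?_ ?_
    · exact ((measurable_const.indicator hmEgs).div measurable_const).aestronglyMeasurable
    · refine Filter.Eventually.of_forall fun ω => ?_
      by_cases h : ω ∈ Egs <;>
        simp [Set.indicator_of_mem, Set.indicator_of_notMem, h, abs_of_nonneg,
          le_of_lt hppos, one_div] <;>
      positivity
  have hw2int : Integrable (fun ω => w₂ ω * (ΔY ω - μg' ω)) μ := by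
    rw [hw₂, hD2]
    exact ratio_mul_integrable hmEgs' hπgs_meas hπgs_bd1 h𝒳 hπgs'_meas hε hπgs'_bd p hf1
  have hw3int : Integrable (fun ω => w₃ ω * (ΔY ω - μc' ω)) μ := by
    rw [hw₃, hD3]
    exact ratio_mul_integrable hmEcs hπgs_meas hπgs_bd1 h𝒳 hπcs_meas hε hπcs_bd p hf2
  have hw4int : Integrable (fun ω => w₄ ω * (ΔY ω - μc' ω)) μ := by
    rw [hw₄, hD4]
    exact ratio_mul_integrable hmEcs' hπgs_meas hπgs_bd1 h𝒳 hπcs'_meas hε hπcs'_bd p hf2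
  -- split the two main integrals
  have hsplit₁ : ∫ ω, (w₁ ω - w₂ ω) * (ΔY ω - μg' ω) ∂μ
      = ∫ ω, w₁ ω * (ΔY ω - μg' ω) ∂μ - ∫ ω, w₂ ω * (ΔY ω - μg' ω) ∂μ := by
    rw [← integral_sub hw1int hw2int]
    exact integral_congr_ae (Filter.Eventually.of_forall fun ω => by ring)
  have hsplit₂ : ∫ ω, (w₃ ω - w₄ ω) * (ΔY ω - μc' ω) ∂μ
      = ∫ ω, w₃ ω * (ΔY ω - μc' ω) ∂μ - ∫ ω, w₄ ω * (ΔY ω - μc' ω) ∂μ := by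
    rw [← integral_sub hw3int hw4int]
    exact integral_congr_ae (Filter.Eventually.of_forall fun ω => by ring)
  -- conditional-measure integrals
  have hcond : ∀ f : Ω → ℝ, ∫ ω, f ω ∂(μ[|Egs]) = p⁻¹ * ∫ ω, Egs.indicator f ω ∂μ := by
    intro f
    rw [ProbabilityTheory.cond, integral_smul_measure, ← integral_indicator hmEgs,
      ENNReal.toReal_inv, hp, smul_eq_mul]
  rw [hsplit₁, hsplit₂, hS1, hS2, hS3, hS4, hcond (fun ω => Ys t (g:ℕ∞) ω - Ys t ⊤ ω),
    hcond (fun ω => Ys' t (g:ℕ∞) ω - Ys' t ⊤ ω)]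
  linear_combination p⁻¹ * hJ1 - p⁻¹ * hQdiff
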